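/- For the ODE 2ϱ a'' − 3a' + (1/8)a = 9/40 with initial condition a(0) = 0, the function a(ϱ) = (3/20)ϱ cos(√ϱ/2) − (9/10)√ϱ sin(√ϱ/2) − (9/5)(cos(√ϱ/2) − 1), defined for ϱ > 0 (and extended analytically to ϱ ≥ 0), is a solution. -/

import Mathlib

private lemma aux_d1 (ϱ : ℝ) (hϱ : 0 < ϱ) :
    HasDerivAt (fun x => 3 / 20 * x * Real.cos (Real.sqrt x / 2)
      - 9 / 10 * Real.sqrt x * Real.sin (Real.sqrt x / 2)
      - 9 / 5 * (Real.cos (Real.sqrt x / 2) - 1))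
      (-3 / 40 * Real.cos (Real.sqrt ϱ / 2)
        - 3 / 80 * Real.sqrt ϱ * Real.sin (Real.sqrt ϱ / 2)) ϱ := by
  have hs0 : Real.sqrt ϱ ≠ 0 := (Real.sqrt_pos.mpr hϱ).ne'
  have hss : Real.sqrt ϱ * Real.sqrt ϱ = ϱ := Real.mul_self_sqrt hϱ.le
  have hs : HasDerivAt Real.sqrt (1 / (2 * Real.sqrt ϱ)) ϱ := Real.hasDerivAt_sqrt hϱ.ne'
  have hs2 : HasDerivAt (fun x => Real.sqrt x / 2) (1 / (2 * Real.sqrt ϱ) / 2) ϱ :=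
    hs.div_const 2
  have hcos : HasDerivAt (fun x => Real.cos (Real.sqrt x / 2))
      (-Real.sin (Real.sqrt ϱ / 2) * (1 / (2 * Real.sqrt ϱ) / 2)) ϱ :=
    (Real.hasDerivAt_cos _).comp ϱ hs2
  have hsin : HasDerivAt (fun x => Real.sin (Real.sqrt x / 2))
      (Real.cos (Real.sqrt ϱ / 2) * (1 / (2 * Real.sqrt ϱ) / 2)) ϱ :=
    (Real.hasDerivAt_sin _).comp ϱ hs2
  have hid : HasDerivAt (fun x : ℝ => 3 / 20 * x) (3 / 20 * 1) ϱ :=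
    (hasDerivAt_id ϱ).const_mul _
  have h1 := hid.mul hcos
  have h2 := (hs.const_mul (9 / 10 : ℝ)).mul hsin
  have h3 := (hcos.sub_const 1).const_mul (9 / 5 : ℝ)
  have h := (h1.sub h2).sub h3
  rw [show (3:ℝ) / 20 * ϱ = 3 / 20 * (Real.sqrt ϱ * Real.sqrt ϱ) by rw [hss]] at h
  refine h.congr_deriv ?_
  field_simp
  linear_combination

private lemma aux_d2 (ϱ : ℝ) (hϱ : 0 < ϱ) :
    HasDerivAt (fun x => -3 / 40 * Real.cos (Real.sqrt x / 2)
      - 3 / 80 * Real.sqrt x * Real.sin (Real.sqrt x / 2))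
      (-3 / 320 * Real.cos (Real.sqrt ϱ / 2)) ϱ := by
  have hs0 : Real.sqrt ϱ ≠ 0 := (Real.sqrt_pos.mpr hϱ).ne'
  have hss : Real.sqrt ϱ * Real.sqrt ϱ = ϱ := Real.mul_self_sqrt hϱ.le
  have hs : HasDerivAt Real.sqrt (1 / (2 * Real.sqrt ϱ)) ϱ := Real.hasDerivAt_sqrt hϱ.ne'
  have hs2 : HasDerivAt (fun x => Real.sqrt x / 2) (1 / (2 * Real.sqrt ϱ) / 2) ϱ :=
    hs.div_const 2
  have hcos : HasDerivAt (fun x => Real.cos (Real.sqrt x / 2))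
      (-Real.sin (Real.sqrt ϱ / 2) * (1 / (2 * Real.sqrt ϱ) / 2)) ϱ :=
    (Real.hasDerivAt_cos _).comp ϱ hs2
  have hsin : HasDerivAt (fun x => Real.sin (Real.sqrt x / 2))
      (Real.cos (Real.sqrt ϱ / 2) * (1 / (2 * Real.sqrt ϱ) / 2)) ϱ :=
    (Real.hasDerivAt_sin _).comp ϱ hs2
  have h1 := hcos.const_mul (-3 / 40 : ℝ)
  have h2 := (hs.const_mul (3 / 80 : ℝ)).mul hsin
  have h := h1.sub h2
  refine h.congr_deriv ?_
  field_simp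
  ring

/-- The function `a(ϱ) = (3/20)ϱ cos(√ϱ/2) − (9/10)√ϱ sin(√ϱ/2) − (9/5)(cos(√ϱ/2) − 1)`
solves `2ϱ a'' − 3a' + (1/8)a = 9/40` for `ϱ > 0`, with `a(0) = 0`. -/
theorem stmt11 (a : ℝ → ℝ)
    (ha : ∀ ϱ : ℝ, a ϱ = 3 / 20 * ϱ * Real.cos (Real.sqrt ϱ / 2)
      - 9 / 10 * Real.sqrt ϱ * Real.sin (Real.sqrt ϱ / 2)
      - 9 / 5 * (Real.cos (Real.sqrt ϱ / 2) - 1)) :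
    a 0 = 0 ∧
    ∀ ϱ : ℝ, 0 < ϱ →
      2 * ϱ * deriv (deriv a) ϱ - 3 * deriv a ϱ + 1 / 8 * a ϱ = 9 / 40 := by
  have hae : a = fun ϱ => 3 / 20 * ϱ * Real.cos (Real.sqrt ϱ / 2)
      - 9 / 10 * Real.sqrt ϱ * Real.sin (Real.sqrt ϱ / 2)
      - 9 / 5 * (Real.cos (Real.sqrt ϱ / 2) - 1) := funext ha
  subst hae
  constructor
  · norm_num
  · intro ϱ hϱ
    have hd1 : ∀ x : ℝ, 0 < x →
        deriv (fun ϱ => 3 / 20 * ϱ * Real.cos (Real.sqrt ϱ / 2)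
          - 9 / 10 * Real.sqrt ϱ * Real.sin (Real.sqrt ϱ / 2)
          - 9 / 5 * (Real.cos (Real.sqrt ϱ / 2) - 1)) x
        = -3 / 40 * Real.cos (Real.sqrt x / 2)
          - 3 / 80 * Real.sqrt x * Real.sin (Real.sqrt x / 2) :=
      fun x hx => (aux_d1 x hx).deriv
    have hev : deriv (fun ϱ => 3 / 20 * ϱ * Real.cos (Real.sqrt ϱ / 2)
          - 9 / 10 * Real.sqrt ϱ * Real.sin (Real.sqrt ϱ / 2)
          - 9 / 5 * (Real.cos (Real.sqrt ϱ / 2) - 1))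
        =ᶠ[nhds ϱ] fun x => -3 / 40 * Real.cos (Real.sqrt x / 2)
          - 3 / 80 * Real.sqrt x * Real.sin (Real.sqrt x / 2) :=
      Filter.eventually_of_mem (Ioi_mem_nhds hϱ) (fun x hx => hd1 x hx)
    have hd2 : deriv (deriv (fun ϱ => 3 / 20 * ϱ * Real.cos (Real.sqrt ϱ / 2)
          - 9 / 10 * Real.sqrt ϱ * Real.sin (Real.sqrt ϱ / 2)
          - 9 / 5 * (Real.cos (Real.sqrt ϱ / 2) - 1))) ϱ
        = -3 / 320 * Real.cos (Real.sqrt ϱ / 2) := by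
      rw [hev.deriv_eq]
      exact (aux_d2 ϱ hϱ).deriv
    rw [hd2, hd1 ϱ hϱ]
    have hss : Real.sqrt ϱ * Real.sqrt ϱ = ϱ := Real.mul_self_sqrt hϱ.le
    ring
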